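/- Let Θ ⊆ ℝ^n be a nonempty closed convex set, P : Θ → 𝒫(ℝ^m) a map assigning to each decision a Borel probability measure, ℓ : ℝ^m × ℝ^n → ℝ a loss, r : ℝ^n → ℝ a differentiable regularizer, and define J_η(θ) := ∫ ℓ(z,θ) dP(η)(z) + r(θ). Assume: (i) for every z, θ ↦ ℓ(z,θ) is differentiable and γ-strongly convex on Θ; (ii) r is ρ-strongly convex on Θ and γ + ρ > 0; (iii) ℓ is β-jointly smooth, i.e., ‖∇_θℓ(z,θ) − ∇_θℓ(z,θ')‖ ≤ β‖θ − θ'‖ and ‖∇_θℓ(z,θ) − ∇_θℓ(z',θ)‖ ≤ β‖z − z'‖ for all θ, θ' ∈ Θ and z, z' ∈ ℝ^m; (iv) for each η ∈ Θ and θ ∈ Θ, z ↦ ℓ(z,θ) and z ↦ ∇_θℓ(z,θ) are P(η)-integrable and θ ↦ ∫ ℓ(z,θ) dP(η)(z) is differentiable with gradient ∫ ∇_θℓ(z,θ) dP(η)(z); (v) P is ε-sensitive in Kantorovich dual form: for every L ≥ 0, every L-Lipschitz function g : ℝ^m → ℝ^n, and all η, η' ∈ Θ, ‖∫ g dP(η)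 − ∫ g dP(η')‖ ≤ εL‖η − η'‖; (vi) εβ < γ + ρ. Suppose for each η ∈ Θ, G(η) ∈ Θ minimizes θ ↦ J_η(θ) over Θ, and let θ_RPS ∈ Θ be a fixed point of G, i.e., G(θ_RPS) = θ_RPS. Then θ_RPS is the unique fixed point of G, and the iterates defined by θ_{t+1} = G(θ_t) from any θ_0 ∈ Θ satisfy ‖θ_t − θ_RPS‖ ≤ (εβ/(γ+ρ))^t · ‖θ_0 − θ_RPS‖ for all t ≥ 0. -/

import Mathlib

open MeasureTheory Filter Set
open scoped RealInnerProductSpace Topology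

section Helpers

variable {E : Type*} [NormedAddCommGroup E] [InnerProductSpace ℝ E] [CompleteSpace E]

lemma aux_deriv_le (φ : ℝ → ℝ) {d M : ℝ} (hd : HasDerivAt φ d 0)
    (h : ∀ t : ℝ, 0 < t → t ≤ 1 → (φ t - φ 0) / t ≤ M) : d ≤ M := by
  have h1 : Tendsto (slope φ 0) (𝓝[>] 0) (𝓝 d) :=
    (hasDerivAt_iff_tendsto_slope.1 hd).mono_left
      (nhdsWithin_mono _ fun x hx => ne_of_gt hx)
  refine le_of_tendsto h1 ?_
  filter_upwards [Ioc_mem_nhdsGT_of_mem (Set.mem_Ico.2 ⟨le_refl (0:ℝ), zero_lt_one⟩)] with t ht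
  rw [slope_def_field]
  simpa using h t ht.1 ht.2

lemma aux_le_deriv (φ : ℝ → ℝ) {d M : ℝ} (hd : HasDerivAt φ d 0)
    (h : ∀ t : ℝ, 0 < t → t ≤ 1 → M ≤ (φ t - φ 0) / t) : M ≤ d := by
  have := aux_deriv_le (fun t => -φ t) hd.neg (M := -M) (by
    intro t ht0 ht1
    have h2 := h t ht0 ht1
    rw [le_div_iff₀ ht0] at h2
    rw [div_le_iff₀ ht0]
    linarith)
  linarith

lemma line_deriv (f : E → ℝ) (hf : Differentiable ℝ f) (x v : E) (t : ℝ) :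
    HasDerivAt (fun s : ℝ => f (x + s • v)) ⟪gradient f (x + t • v), v⟫ t := by
  have hline : HasDerivAt (fun s : ℝ => x + s • v) v t := by
    simpa using ((hasDerivAt_id t).smul_const v).const_add x
  have hF : HasFDerivAt f (InnerProductSpace.toDual ℝ E (gradient f (x + t • v)))
      (x + t • v) := hasGradientAt_iff_hasFDerivAt.1 (hf _).hasGradientAt
  have := hF.comp_hasDerivAt t hline
  rw [InnerProductSpace.toDual_apply_apply] at this
  exact this

lemma normsq_line_deriv (x v : E) (t : ℝ) :
    HasDerivAt (fun s : ℝ => ‖x + s • v‖ ^ 2) (2 * ⟪x + t • v, v⟫) t := by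
  have hline : HasDerivAt (fun s : ℝ => x + s • v) v t := by
    simpa using ((hasDerivAt_id t).smul_const v).const_add x
  have h := hline.inner ℝ hline
  have heq : (fun s : ℝ => ⟪x + s • v, x + s • v⟫) = fun s : ℝ => ‖x + s • v‖ ^ 2 := by
    funext s; rw [real_inner_self_eq_norm_sq]
  rw [heq] at h
  refine h.congr_deriv ?_
  rw [real_inner_comm v (x + t • v)]; ring

lemma first_order (Θ : Set E) (hΘ : Convex ℝ Θ) (c : ℝ) (f : E → ℝ)
    (hf : Differentiable ℝ f) (hsc : ConvexOn ℝ Θ (fun θ => f θ - c / 2 * ‖θ‖ ^ 2))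
    {x y : E} (hx : x ∈ Θ) (hy : y ∈ Θ) :
    f x + ⟪gradient f x, y - x⟫ + c / 2 * ‖y - x‖ ^ 2 ≤ f y := by
  set v := y - x with hv
  set φ : ℝ → ℝ := fun s => f (x + s • v) - c / 2 * ‖x + s • v‖ ^ 2 with hφ
  have hφd : HasDerivAt φ (⟪gradient f x, v⟫ - c * ⟪x, v⟫) 0 := by
    have h1 := line_deriv f hf x v 0
    have h2 := normsq_line_deriv x v 0
    simp only [zero_smul, add_zero] at h1 h2
    have := h1.sub ((h2.const_mul (c / 2)))
    refine this.congr_deriv ?_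
    ring
  have key : ∀ t : ℝ, 0 < t → t ≤ 1 →
      (φ t - φ 0) / t ≤ (f y - c / 2 * ‖y‖ ^ 2) - (f x - c / 2 * ‖x‖ ^ 2) := by
    intro t ht0 ht1
    have hcomb : (1 - t) • x + t • y = x + t • v := by
      rw [hv]; module
    have hconv := hsc.2 hx hy (by linarith : (0:ℝ) ≤ 1 - t) ht0.le (by ring)
    rw [hcomb] at hconv
    simp only [smul_eq_mul] at hconv
    have hφt : φ t ≤ (1 - t) * (f x - c / 2 * ‖x‖ ^ 2) + t * (f y - c / 2 * ‖y‖ ^ 2) := hconv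
    have hφ0 : φ 0 = f x - c / 2 * ‖x‖ ^ 2 := by simp [hφ]
    rw [div_le_iff₀ ht0, hφ0]
    nlinarith
  have hd := aux_deriv_le φ hφd key
  have hexp : ‖y - x‖ ^ 2 = ‖y‖ ^ 2 - 2 * ⟪y, x⟫ + ‖x‖ ^ 2 := norm_sub_sq_real y x
  have hiv : ⟪x, v⟫ = ⟪x, y⟫ - ‖x‖ ^ 2 := by
    rw [hv, inner_sub_right, real_inner_self_eq_norm_sq]
  have hcomm : ⟪x, y⟫ = ⟪y, x⟫ := real_inner_comm y x
  rw [hiv, hcomm] at hd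
  simp only [hv] at hd ⊢
  rw [hexp]
  linarith

lemma grad_strong_mono (Θ : Set E) (hΘ : Convex ℝ Θ) (c : ℝ) (f : E → ℝ)
    (hf : Differentiable ℝ f) (hsc : ConvexOn ℝ Θ (fun θ => f θ - c / 2 * ‖θ‖ ^ 2))
    {x y : E} (hx : x ∈ Θ) (hy : y ∈ Θ) :
    c * ‖x - y‖ ^ 2 ≤ ⟪gradient f x - gradient f y, x - y⟫ := by
  have h1 := first_order Θ hΘ c f hf hsc hx hy
  have h2 := first_order Θ hΘ c f hf hsc hy hx
  have hn : ‖y - x‖ = ‖x - y‖ := norm_sub_rev y x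
  rw [hn] at h1
  simp only [inner_sub_left, inner_sub_right] at h1 h2 ⊢
  have c1 : ⟪gradient f x, y⟫ = ⟪gradient f x, y⟫ := rfl
  nlinarith [h1, h2]

lemma first_order_opt (Θ : Set E) (hΘ : Convex ℝ Θ) (f : E → ℝ) {g x : E}
    (hx : x ∈ Θ) (hg : HasGradientAt f g x) (hmin : ∀ y ∈ Θ, f x ≤ f y)
    {y : E} (hy : y ∈ Θ) : 0 ≤ ⟪g, y - x⟫ := by
  set v := y - x with hv
  have hline : HasDerivAt (fun s : ℝ => x + s • v) v 0 := by
    simpa using ((hasDerivAt_id (0:ℝ)).smul_const v).const_add x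
  have hx0 : x + (0:ℝ) • v = x := by simp
  have hF : HasFDerivAt f (InnerProductSpace.toDual ℝ E g) (x + (0:ℝ) • v) := by
    rw [hx0]; exact hasGradientAt_iff_hasFDerivAt.1 hg
  have hφd : HasDerivAt (fun s : ℝ => f (x + s • v)) ⟪g, v⟫ 0 := by
    have := hF.comp_hasDerivAt 0 hline
    rw [InnerProductSpace.toDual_apply_apply] at this
    exact this
  refine aux_le_deriv _ hφd ?_
  intro t ht0 ht1
  have hmem : x + t • v ∈ Θ := hΘ.add_smul_sub_mem hx hy ⟨ht0.le, ht1⟩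
  have := hmin _ hmem
  have h0 : f (x + (0:ℝ) • v) = f x := by rw [hx0]
  have : 0 ≤ f (x + t • v) - f (x + (0:ℝ) • v) := by rw [h0]; linarith
  positivity

end Helpers




open MeasureTheory

/-- Theorem 1(b) of the paper: under `εβ < γ + ρ`, the repeated robust risk
minimization update `G` (the minimizer over `Θ` of the decoupled risk
`J_η(θ) = ∫ ℓ(z,θ) dP(η)(z) + r(θ)`) has a unique fixed point `θ_RPS` in `Θ`,
and the iterates `θ_{t+1} = G(θ_t)` from any `θ₀ ∈ Θ` converge to `θ_RPS` at
the linear rate `εβ/(γ+ρ)`. Here `γ`-strong convexity of `f` on `Θ` means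
convexity of `θ ↦ f θ - γ/2 * ‖θ‖²` on `Θ`, and the distribution map `P` is
`ε`-sensitive in the Kantorovich dual form. -/
theorem RRRM_linear_convergence {n m : ℕ} (γ ρ β ε : ℝ)
    (hβ : 0 ≤ β) (hε : 0 ≤ ε) (hγρ : 0 < γ + ρ)
    (Θ : Set (EuclideanSpace ℝ (Fin n))) (hΘne : Θ.Nonempty)
    (hΘcl : IsClosed Θ) (hΘconv : Convex ℝ Θ)
    (P : EuclideanSpace ℝ (Fin n) → Measure (EuclideanSpace ℝ (Fin m)))
    (hP : ∀ η, IsProbabilityMeasure (P η))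
    (ℓ : EuclideanSpace ℝ (Fin m) → EuclideanSpace ℝ (Fin n) → ℝ)
    (r : EuclideanSpace ℝ (Fin n) → ℝ) (hr : Differentiable ℝ r)
    -- (i) differentiability and γ-strong convexity of the loss in θ
    (hℓdiff : ∀ z, Differentiable ℝ (fun θ => ℓ z θ))
    (hℓsc : ∀ z, ConvexOn ℝ Θ (fun θ => ℓ z θ - γ / 2 * ‖θ‖ ^ 2))
    -- (ii) ρ-strong convexity of the regularizer
    (hrsc : ConvexOn ℝ Θ (fun θ => r θ - ρ / 2 * ‖θ‖ ^ 2))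
    -- (iii) β-joint smoothness
    (hsmooth₁ : ∀ z, ∀ θ ∈ Θ, ∀ θ' ∈ Θ,
      ‖gradient (fun t => ℓ z t) θ - gradient (fun t => ℓ z t) θ'‖ ≤ β * ‖θ - θ'‖)
    (hsmooth₂ : ∀ θ ∈ Θ, ∀ z z' : EuclideanSpace ℝ (Fin m),
      ‖gradient (fun t => ℓ z t) θ - gradient (fun t => ℓ z' t) θ‖ ≤ β * ‖z - z'‖)
    -- (iv) integrability and differentiation under the integral sign
    (hint : ∀ η ∈ Θ, ∀ θ ∈ Θ, Integrable (fun z => ℓ z θ) (P η) ∧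
      Integrable (fun z => gradient (fun t => ℓ z t) θ) (P η))
    (hgrad : ∀ η ∈ Θ, ∀ θ ∈ Θ,
      HasGradientAt (fun t => ∫ z, ℓ z t ∂(P η))
        (∫ z, gradient (fun t => ℓ z t) θ ∂(P η)) θ)
    -- (v) ε-sensitivity in Kantorovich dual form
    (hsens : ∀ L : ℝ, 0 ≤ L →
      ∀ g : EuclideanSpace ℝ (Fin m) → EuclideanSpace ℝ (Fin n),
        (∀ z z', ‖g z - g z'‖ ≤ L * ‖z - z'‖) →
        ∀ η ∈ Θ, ∀ η' ∈ Θ,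
          ‖(∫ z, g z ∂(P η)) - ∫ z, g z ∂(P η')‖ ≤ ε * L * ‖η - η'‖)
    -- (vi) contraction condition
    (hcontr : ε * β < γ + ρ)
    -- G(η) minimizes J_η over Θ
    (G : EuclideanSpace ℝ (Fin n) → EuclideanSpace ℝ (Fin n))
    (hG : ∀ η ∈ Θ, G η ∈ Θ ∧ ∀ θ ∈ Θ,
      (∫ z, ℓ z (G η) ∂(P η)) + r (G η) ≤ (∫ z, ℓ z θ ∂(P η)) + r θ)
    -- θ_RPS is a fixed point of G in Θ
    (θRPS : EuclideanSpace ℝ (Fin n)) (hRPSmem : θRPS ∈ Θ)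
    (hRPSfix : G θRPS = θRPS) :
    (∀ θ' ∈ Θ, G θ' = θ' → θ' = θRPS) ∧
      ∀ θ₀ ∈ Θ, ∀ t : ℕ,
        ‖G^[t] θ₀ - θRPS‖ ≤ (ε * β / (γ + ρ)) ^ t * ‖θ₀ - θRPS‖ := by
  have hκ0 : 0 ≤ ε * β / (γ + ρ) := div_nonneg (mul_nonneg hε hβ) hγρ.le
  have hκ1 : ε * β / (γ + ρ) < 1 := (div_lt_one hγρ).2 hcontr
  set Φ : EuclideanSpace ℝ (Fin n) → EuclideanSpace ℝ (Fin n) → EuclideanSpace ℝ (Fin n) :=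
    fun η θ => (∫ z, gradient (fun t => ℓ z t) θ ∂(P η)) + gradient r θ with hΦ
  have hJgrad : ∀ η ∈ Θ, ∀ θ ∈ Θ,
      HasGradientAt (fun t => (∫ z, ℓ z t ∂(P η)) + r t) (Φ η θ) θ := by
    intro η hη θ hθ
    have h1 := hgrad η hη θ hθ
    have h2 := (hr θ).hasGradientAt
    rw [hasGradientAt_iff_hasFDerivAt] at h1 h2 ⊢
    simp only [hΦ, map_add]
    exact h1.add h2
  have hopt : ∀ η ∈ Θ, ∀ θ ∈ Θ, 0 ≤ ⟪Φ η (G η), θ - G η⟫ := by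
    intro η hη θ hθ
    exact first_order_opt Θ hΘconv _ (hG η hη).1 (hJgrad η hη _ (hG η hη).1)
      (hG η hη).2 hθ
  have hmono : ∀ η ∈ Θ, ∀ θ₁ ∈ Θ, ∀ θ₂ ∈ Θ,
      (γ + ρ) * ‖θ₁ - θ₂‖ ^ 2 ≤ ⟪Φ η θ₁ - Φ η θ₂, θ₁ - θ₂⟫ := by
    intro η hη θ₁ h₁ θ₂ h₂
    haveI := hP η
    have hrm := grad_strong_mono Θ hΘconv ρ r hr hrsc h₁ h₂
    have int1 := (hint η hη θ₁ h₁).2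
    have int2 := (hint η hη θ₂ h₂).2
    have hsub : Φ η θ₁ - Φ η θ₂ =
        (∫ z, (gradient (fun t => ℓ z t) θ₁ - gradient (fun t => ℓ z t) θ₂) ∂(P η))
          + (gradient r θ₁ - gradient r θ₂) := by
      rw [integral_sub int1 int2]
      simp only [hΦ]
      abel
    have hii : ⟪∫ z, (gradient (fun t => ℓ z t) θ₁ - gradient (fun t => ℓ z t) θ₂) ∂(P η),
        θ₁ - θ₂⟫ = ∫ z, ⟪θ₁ - θ₂,
          gradient (fun t => ℓ z t) θ₁ - gradient (fun t => ℓ z t) θ₂⟫ ∂(P η) := by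
      have intsub : Integrable (fun z =>
          gradient (fun t => ℓ z t) θ₁ - gradient (fun t => ℓ z t) θ₂) (P η) := int1.sub int2
      rw [integral_inner intsub (θ₁ - θ₂)]
      exact real_inner_comm _ _
    have hptwise : ∀ z, γ * ‖θ₁ - θ₂‖ ^ 2 ≤ ⟪θ₁ - θ₂,
        gradient (fun t => ℓ z t) θ₁ - gradient (fun t => ℓ z t) θ₂⟫ := fun z => by
      rw [real_inner_comm]
      exact grad_strong_mono Θ hΘconv γ _ (hℓdiff z) (hℓsc z) h₁ h₂
    have hlb : γ * ‖θ₁ - θ₂‖ ^ 2 ≤ ∫ z, ⟪θ₁ - θ₂,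
        gradient (fun t => ℓ z t) θ₁ - gradient (fun t => ℓ z t) θ₂⟫ ∂(P η) := by
      have intsub : Integrable (fun z =>
          gradient (fun t => ℓ z t) θ₁ - gradient (fun t => ℓ z t) θ₂) (P η) := int1.sub int2
      have := integral_mono (integrable_const (γ * ‖θ₁ - θ₂‖ ^ 2))
        (intsub.const_inner (θ₁ - θ₂)) hptwise
      simpa [integral_const, measure_univ] using this
    rw [hsub, inner_add_left, hii]
    linarith
  have hcontraction : ∀ η ∈ Θ, ∀ η' ∈ Θ,
      ‖G η - G η'‖ ≤ (ε * β / (γ + ρ)) * ‖η - η'‖ := by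
    intro η hη η' hη'
    obtain ⟨hx, -⟩ := hG η hη
    obtain ⟨hx', -⟩ := hG η' hη'
    have h1 : 0 ≤ ⟪Φ η (G η), G η' - G η⟫ := hopt η hη (G η') hx'
    have h2 : 0 ≤ ⟪Φ η' (G η'), G η - G η'⟫ := hopt η' hη' (G η) hx
    have h3 := hmono η hη (G η) hx (G η') hx'
    have hs := hsens β hβ (fun z => gradient (fun t => ℓ z t) (G η'))
      (fun z z' => hsmooth₂ (G η') hx' z z') η hη η' hη'
    have e5 : Φ η (G η') - Φ η' (G η') =
        (∫ z, gradient (fun t => ℓ z t) (G η') ∂(P η)) -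
          ∫ z, gradient (fun t => ℓ z t) (G η') ∂(P η') := by
      simp only [hΦ]
      abel
    have e4 : ⟪Φ η (G η') - Φ η' (G η'), G η' - G η⟫ ≤
        (ε * β * ‖η - η'‖) * ‖G η - G η'‖ := by
      calc ⟪Φ η (G η') - Φ η' (G η'), G η' - G η⟫
          ≤ ‖Φ η (G η') - Φ η' (G η')‖ * ‖G η' - G η‖ := real_inner_le_norm _ _
        _ ≤ (ε * β * ‖η - η'‖) * ‖G η' - G η‖ := by
            refine mul_le_mul_of_nonneg_right ?_ (norm_nonneg _)
            rw [e5]; exact hs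
        _ = (ε * β * ‖η - η'‖) * ‖G η - G η'‖ := by rw [norm_sub_rev (G η') (G η)]
    have hflip : ∀ a : EuclideanSpace ℝ (Fin n), ⟪a, G η' - G η⟫ = -⟪a, G η - G η'⟫ := by
      intro a
      rw [show G η' - G η = -(G η - G η') from (neg_sub _ _).symm, inner_neg_right]
    have hchain : (γ + ρ) * ‖G η - G η'‖ ^ 2 ≤ (ε * β * ‖η - η'‖) * ‖G η - G η'‖ := by
      rw [inner_sub_left] at h3 e4
      rw [hflip] at h1
      simp only [hflip] at e4
      linarith
    rcases eq_or_lt_of_le (norm_nonneg (G η - G η')) with h0 | h0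
    · rw [← h0]
      positivity
    · rw [div_mul_eq_mul_div, le_div_iff₀ hγρ]
      nlinarith
  refine ⟨?_, ?_⟩
  · intro θ' hθ' hfix
    have h := hcontraction θ' hθ' θRPS hRPSmem
    rw [hfix, hRPSfix] at h
    have hnn := norm_nonneg (θ' - θRPS)
    have hz : ‖θ' - θRPS‖ = 0 := by nlinarith
    rw [← sub_eq_zero]
    exact norm_eq_zero.1 hz
  · intro θ₀ hθ₀ t
    have hmem : ∀ k : ℕ, G^[k] θ₀ ∈ Θ := by
      intro k
      induction k with
      | zero => simpa using hθ₀
      | succ j ihj => rw [Function.iterate_succ_apply']; exact (hG _ ihj).1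
    induction t with
    | zero => simp
    | succ k ih =>
      rw [Function.iterate_succ_apply']
      have h := hcontraction (G^[k] θ₀) (hmem k) θRPS hRPSmem
      rw [hRPSfix] at h
      calc ‖G (G^[k] θ₀) - θRPS‖ ≤ (ε * β / (γ + ρ)) * ‖G^[k] θ₀ - θRPS‖ := h
        _ ≤ (ε * β / (γ + ρ)) * ((ε * β / (γ + ρ)) ^ k * ‖θ₀ - θRPS‖) :=
            mul_le_mul_of_nonneg_left ih hκ0
        _ = (ε * β / (γ + ρ)) ^ (k + 1) * ‖θ₀ - θRPS‖ := by ring
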